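/- There exists a constant C > 0 such that for all natural numbers j < k, ∑_{1 ≤ i₁ < i₂ < i₃ < i₄ ≤ k−j} g(i₁) g(i₂−i₁) g(i₃−i₂) g(i₄−i₃) ≤ C (k−j)². -/

import Mathlib

/-- Return probabilities of the simple symmetric random walk. -/
noncomputable def gfun (k : ℕ) : ℝ :=
  if Even k then (Nat.choose k (k / 2) : ℝ) / 2 ^ k else 0

lemma gfun_nonneg (n : ℕ) : 0 ≤ gfun n := by
  unfold gfun; split <;> positivity

lemma centralBinom_sq_bound (i : ℕ) :
    ((Nat.centralBinom i : ℝ) / 4 ^ i) ^ 2 * (2 * i + 1) ≤ 1 := by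
  induction i with
  | zero => norm_num [Nat.centralBinom_zero]
  | succ i ih =>
    have hrec : ((i : ℝ) + 1) * Nat.centralBinom (i + 1)
        = 2 * (2 * i + 1) * Nat.centralBinom i := by
      exact_mod_cast congrArg (Nat.cast : ℕ → ℝ) (Nat.succ_mul_centralBinom_succ i)
    have h4 : (0:ℝ) < 4 ^ i := by positivity
    have hCB : (0:ℝ) ≤ (Nat.centralBinom i : ℝ) := Nat.cast_nonneg _
    have heq : ((Nat.centralBinom (i+1) : ℝ) / 4 ^ (i+1))
        = ((Nat.centralBinom i : ℝ) / 4 ^ i) * ((2 * i + 1) / (2 * i + 2)) := by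
      have hi1 : ((i:ℝ) + 1) ≠ 0 := by positivity
      field_simp
      linear_combination (2 * (4:ℝ) ^ i) * hrec
    rw [heq]
    push_cast
    have key : (((Nat.centralBinom i : ℝ) / 4 ^ i) * ((2 * i + 1) / (2 * i + 2))) ^ 2
        * (2 * (i + 1) + 1)
        = (((Nat.centralBinom i : ℝ) / 4 ^ i) ^ 2 * (2 * i + 1))
          * ((2 * i + 1) * (2 * i + 3) / (2 * i + 2) ^ 2) := by
      push_cast
      field_simp
      ring
    rw [key]
    have hle : ((2 * (i:ℝ) + 1) * (2 * i + 3) / (2 * i + 2) ^ 2) ≤ 1 := by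
      rw [div_le_one (by positivity)]
      nlinarith
    have h0 : (0:ℝ) ≤ ((Nat.centralBinom i : ℝ) / 4 ^ i) ^ 2 * (2 * i + 1) := by positivity
    calc _ ≤ (((Nat.centralBinom i : ℝ) / 4 ^ i) ^ 2 * (2 * i + 1)) * 1 :=
          mul_le_mul_of_nonneg_left hle h0
      _ ≤ 1 := by rw [mul_one]; exact ih

lemma gfun_le_inv_sqrt (n : ℕ) (hn : 1 ≤ n) : gfun n ≤ 1 / Real.sqrt n := by
  unfold gfun
  split
  · rename_i he
    obtain ⟨i, hi⟩ := he
    have hi' : n = 2 * i := by omega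
    subst hi'
    have hchoose : Nat.choose (2 * i) ((2 * i) / 2) = Nat.centralBinom i := by
      rw [Nat.centralBinom]; congr 1; omega
    rw [hchoose]
    have h2pow : (2:ℝ) ^ (2 * i) = 4 ^ i := by
      rw [pow_mul]; norm_num
    rw [h2pow]
    have hsq := centralBinom_sq_bound i
    set p : ℝ := (Nat.centralBinom i : ℝ) / 4 ^ i with hp
    have hp0 : 0 ≤ p := by positivity
    have hn0 : (0:ℝ) < (2 * i : ℕ) := by
      exact_mod_cast (by omega : 0 < 2 * i)
    have hsqrt_pos : 0 < Real.sqrt ((2 * i : ℕ) : ℝ) := Real.sqrt_pos.mpr hn0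
    rw [le_div_iff₀ hsqrt_pos]
    -- (p * sqrt(2i))^2 = p^2 * 2i ≤ p^2 * (2i+1) ≤ 1
    have h1 : (p * Real.sqrt ((2 * i : ℕ) : ℝ)) ^ 2 ≤ 1 := by
      rw [mul_pow, Real.sq_sqrt hn0.le]
      push_cast
      nlinarith [hsq, sq_nonneg p]
    nlinarith [mul_nonneg hp0 hsqrt_pos.le, h1]
  · positivity

lemma sum_inv_sqrt_le (m : ℕ) :
    ∑ a ∈ Finset.Icc 1 m, 1 / Real.sqrt a ≤ 2 * Real.sqrt m := by
  induction m with
  | zero => simp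
  | succ m ih =>
    rw [Finset.sum_Icc_succ_top (by omega)]
    have hstep : 1 / Real.sqrt (m + 1 : ℕ) ≤ 2 * Real.sqrt (m + 1 : ℕ) - 2 * Real.sqrt m := by
      have h1 : (0:ℝ) < ((m:ℝ) + 1) := by positivity
      have hs1 : Real.sqrt ((m + 1 : ℕ) : ℝ) = Real.sqrt ((m:ℝ) + 1) := by push_cast; ring_nf
      rw [hs1]
      have hpos : 0 < Real.sqrt ((m:ℝ) + 1) := Real.sqrt_pos.mpr h1
      rw [div_le_iff₀ hpos]
      have hsq1 : Real.sqrt ((m:ℝ) + 1) ^ 2 = (m:ℝ) + 1 := Real.sq_sqrt h1.le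
      have hsq2 : Real.sqrt (m:ℝ) ^ 2 = (m:ℝ) := Real.sq_sqrt (Nat.cast_nonneg m)
      have hmono : Real.sqrt (m:ℝ) ≤ Real.sqrt ((m:ℝ) + 1) := Real.sqrt_le_sqrt (by linarith)
      nlinarith [Real.sqrt_nonneg (m:ℝ), Real.sqrt_nonneg ((m:ℝ)+1),
        sq_nonneg (Real.sqrt ((m:ℝ)+1) - Real.sqrt (m:ℝ))]
    have hmono : Real.sqrt (m:ℝ) ≤ Real.sqrt ((m+1 : ℕ) : ℝ) := by
      apply Real.sqrt_le_sqrt; push_cast; linarith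
    linarith [ih]

lemma sum_gfun_le (m : ℕ) :
    ∑ a ∈ Finset.Icc 1 m, gfun a ≤ 2 * Real.sqrt m := by
  calc ∑ a ∈ Finset.Icc 1 m, gfun a ≤ ∑ a ∈ Finset.Icc 1 m, 1 / Real.sqrt a := by
        apply Finset.sum_le_sum
        intro a ha
        exact gfun_le_inv_sqrt a (Finset.mem_Icc.mp ha).1
    _ ≤ 2 * Real.sqrt m := sum_inv_sqrt_le m

lemma sum_reflect (t : ℕ) (f : ℕ → ℝ) :
    ∑ x ∈ Finset.Ico 1 t, f (t - x) = ∑ x ∈ Finset.Ico 1 t, f x := by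
  refine Finset.sum_nbij' (fun x => t - x) (fun x => t - x) ?_ ?_ ?_ ?_ ?_ <;>
    intro x hx <;> simp only [Finset.mem_Ico] at hx ⊢ <;> omega

lemma sum_gfun_Ico_le (t m : ℕ) (ht : t ≤ m + 1) :
    ∑ a ∈ Finset.Ico 1 t, gfun a ≤ 2 * Real.sqrt m := by
  calc ∑ a ∈ Finset.Ico 1 t, gfun a ≤ ∑ a ∈ Finset.Icc 1 m, gfun a := by
        apply Finset.sum_le_sum_of_subset_of_nonneg
        · intro a ha
          simp only [Finset.mem_Ico, Finset.mem_Icc] at *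
          omega
        · intro a _ _; exact gfun_nonneg a
    _ ≤ 2 * Real.sqrt m := sum_gfun_le m

lemma conv_le (t : ℕ) : ∑ a ∈ Finset.Ico 1 t, gfun a * gfun (t - a) ≤ 6 := by
  rcases le_or_gt t 1 with ht | ht
  · have : Finset.Ico 1 t = ∅ := by
      apply Finset.Ico_eq_empty; omega
    rw [this]; norm_num
  have htpos : (0:ℝ) < (t:ℝ) := by exact_mod_cast Nat.lt_of_lt_of_le Nat.zero_lt_one ht.le
  have hst : 0 < Real.sqrt t := Real.sqrt_pos.mpr htpos
  have key : ∀ a ∈ Finset.Ico 1 t,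
      gfun a * gfun (t - a) ≤ Real.sqrt 2 / Real.sqrt t * (1 / Real.sqrt a + 1 / Real.sqrt ((t - a : ℕ))) := by
    intro a ha
    simp only [Finset.mem_Ico] at ha
    have ha1 : (1:ℕ) ≤ a := ha.1
    have hb1 : (1:ℕ) ≤ t - a := by omega
    have hca : (0:ℝ) < (a:ℝ) := by exact_mod_cast ha1
    have hcb : (0:ℝ) < ((t - a : ℕ) : ℝ) := by exact_mod_cast hb1
    have hsa : 0 < Real.sqrt (a:ℝ) := Real.sqrt_pos.mpr hca
    have hsb : 0 < Real.sqrt ((t - a : ℕ) : ℝ) := Real.sqrt_pos.mpr hcb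
    have hga := gfun_le_inv_sqrt a ha1
    have hgb := gfun_le_inv_sqrt (t - a) hb1
    have hprod : gfun a * gfun (t - a) ≤ 1 / Real.sqrt a * (1 / Real.sqrt ((t - a : ℕ))) :=
      mul_le_mul hga hgb (gfun_nonneg _) (by positivity)
    refine hprod.trans ?_
    rcases le_or_gt (2 * a) t with hc | hc
    · -- t ≤ 2 * (t - a), so sqrt t ≤ sqrt 2 * sqrt (t - a), i.e. 1/sqrt(t-a) ≤ sqrt 2 / sqrt t
      have h2 : (t:ℝ) ≤ 2 * ((t - a : ℕ) : ℝ) := by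
        have : (t:ℕ) ≤ 2 * (t - a) := by omega
        exact_mod_cast this
      have hsq : Real.sqrt t ≤ Real.sqrt 2 * Real.sqrt ((t - a : ℕ)) := by
        rw [← Real.sqrt_mul (by norm_num)]
        exact Real.sqrt_le_sqrt h2
      have hinv : 1 / Real.sqrt ((t - a : ℕ)) ≤ Real.sqrt 2 / Real.sqrt t := by
        rw [div_le_div_iff₀ hsb hst]
        nlinarith
      calc 1 / Real.sqrt a * (1 / Real.sqrt ((t - a : ℕ)))
          ≤ 1 / Real.sqrt a * (Real.sqrt 2 / Real.sqrt t) :=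
            mul_le_mul_of_nonneg_left hinv (by positivity)
        _ ≤ Real.sqrt 2 / Real.sqrt t * (1 / Real.sqrt a + 1 / Real.sqrt ((t - a : ℕ))) := by
            rw [mul_comm]
            have h1 : (0:ℝ) ≤ Real.sqrt 2 / Real.sqrt t := by positivity
            have h2' : (0:ℝ) ≤ 1 / Real.sqrt ((t - a : ℕ)) := by positivity
            nlinarith
    · -- t ≤ 2 * a, so 1/sqrt a ≤ sqrt 2 / sqrt t
      have h2 : (t:ℝ) ≤ 2 * (a:ℝ) := by exact_mod_cast hc.le
      have hsq : Real.sqrt t ≤ Real.sqrt 2 * Real.sqrt (a:ℝ) := by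
        rw [← Real.sqrt_mul (by norm_num)]
        exact Real.sqrt_le_sqrt h2
      have hinv : 1 / Real.sqrt (a:ℝ) ≤ Real.sqrt 2 / Real.sqrt t := by
        rw [div_le_div_iff₀ hsa hst]
        nlinarith
      calc 1 / Real.sqrt a * (1 / Real.sqrt ((t - a : ℕ)))
          ≤ Real.sqrt 2 / Real.sqrt t * (1 / Real.sqrt ((t - a : ℕ))) :=
            mul_le_mul_of_nonneg_right hinv (by positivity)
        _ ≤ Real.sqrt 2 / Real.sqrt t * (1 / Real.sqrt a + 1 / Real.sqrt ((t - a : ℕ))) := by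
            have h1 : (0:ℝ) ≤ Real.sqrt 2 / Real.sqrt t := by positivity
            have h2' : (0:ℝ) ≤ 1 / Real.sqrt (a:ℝ) := by positivity
            nlinarith
  calc ∑ a ∈ Finset.Ico 1 t, gfun a * gfun (t - a)
      ≤ ∑ a ∈ Finset.Ico 1 t,
          Real.sqrt 2 / Real.sqrt t * (1 / Real.sqrt a + 1 / Real.sqrt ((t - a : ℕ))) :=
        Finset.sum_le_sum key
    _ = Real.sqrt 2 / Real.sqrt t *
          (∑ a ∈ Finset.Ico 1 t, 1 / Real.sqrt a + ∑ a ∈ Finset.Ico 1 t, 1 / Real.sqrt ((t - a : ℕ))) := by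
        rw [← Finset.sum_add_distrib, Finset.mul_sum]
    _ = Real.sqrt 2 / Real.sqrt t * (2 * ∑ a ∈ Finset.Ico 1 t, 1 / Real.sqrt a) := by
        rw [sum_reflect t (fun a => 1 / Real.sqrt a)]; ring
    _ ≤ Real.sqrt 2 / Real.sqrt t * (2 * (2 * Real.sqrt t)) := by
        apply mul_le_mul_of_nonneg_left _ (by positivity)
        apply mul_le_mul_of_nonneg_left _ (by norm_num)
        calc ∑ a ∈ Finset.Ico 1 t, 1 / Real.sqrt a
            = ∑ a ∈ Finset.Icc 1 (t - 1), 1 / Real.sqrt a := by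
              rw [← Finset.Ico_add_one_right_eq_Icc]
              congr 1
          _ ≤ 2 * Real.sqrt ((t - 1 : ℕ)) := sum_inv_sqrt_le (t - 1)
          _ ≤ 2 * Real.sqrt t := by
              apply mul_le_mul_of_nonneg_left _ (by norm_num)
              apply Real.sqrt_le_sqrt
              have : (t - 1 : ℕ) ≤ t := by omega
              exact_mod_cast this
    _ = 4 * Real.sqrt 2 := by field_simp; ring
    _ ≤ 6 := by
        nlinarith [Real.sq_sqrt (by norm_num : (0:ℝ) ≤ 2), Real.sqrt_nonneg 2]

theorem quadruple_sum_gggg_bound :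
    ∃ C : ℝ, 0 < C ∧ ∀ j k : ℕ, j < k →
      ∑ i₄ ∈ Finset.Icc 1 (k - j), ∑ i₃ ∈ Finset.Ico 1 i₄,
        ∑ i₂ ∈ Finset.Ico 1 i₃, ∑ i₁ ∈ Finset.Ico 1 i₂,
          gfun i₁ * gfun (i₂ - i₁) * gfun (i₃ - i₂) * gfun (i₄ - i₃) ≤
        C * ((k : ℝ) - j) ^ 2 := by
  refine ⟨24, by norm_num, ?_⟩
  intro j k hjk
  set m := k - j with hm
  have hcast : (k : ℝ) - j = (m : ℝ) := by
    rw [hm]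
    push_cast [Nat.cast_sub hjk.le]
    ring
  rw [hcast]
  have hS : ∀ t : ℕ, t ≤ m + 1 → ∑ a ∈ Finset.Ico 1 t, gfun a ≤ 2 * Real.sqrt m :=
    fun t ht => sum_gfun_Ico_le t m ht
  have hsqm : Real.sqrt m * Real.sqrt m = (m : ℝ) := Real.mul_self_sqrt (Nat.cast_nonneg m)
  calc ∑ i₄ ∈ Finset.Icc 1 m, ∑ i₃ ∈ Finset.Ico 1 i₄,
        ∑ i₂ ∈ Finset.Ico 1 i₃, ∑ i₁ ∈ Finset.Ico 1 i₂,
          gfun i₁ * gfun (i₂ - i₁) * gfun (i₃ - i₂) * gfun (i₄ - i₃)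
      ≤ ∑ i₄ ∈ Finset.Icc 1 m, ∑ i₃ ∈ Finset.Ico 1 i₄,
          ∑ i₂ ∈ Finset.Ico 1 i₃, 6 * (gfun (i₃ - i₂) * gfun (i₄ - i₃)) := by
        apply Finset.sum_le_sum; intro i₄ _
        apply Finset.sum_le_sum; intro i₃ _
        apply Finset.sum_le_sum; intro i₂ _
        have hfact : ∑ i₁ ∈ Finset.Ico 1 i₂,
            gfun i₁ * gfun (i₂ - i₁) * gfun (i₃ - i₂) * gfun (i₄ - i₃)
            = (∑ i₁ ∈ Finset.Ico 1 i₂, gfun i₁ * gfun (i₂ - i₁))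
              * (gfun (i₃ - i₂) * gfun (i₄ - i₃)) := by
          rw [Finset.sum_mul]
          apply Finset.sum_congr rfl
          intro i₁ _
          ring
        rw [hfact]
        exact mul_le_mul_of_nonneg_right (conv_le i₂)
          (mul_nonneg (gfun_nonneg _) (gfun_nonneg _))
    _ ≤ ∑ i₄ ∈ Finset.Icc 1 m, ∑ i₃ ∈ Finset.Ico 1 i₄,
          6 * (2 * Real.sqrt m) * gfun (i₄ - i₃) := by
        apply Finset.sum_le_sum; intro i₄ hi₄
        apply Finset.sum_le_sum; intro i₃ hi₃
        have hi₄m : i₄ ≤ m := (Finset.mem_Icc.mp hi₄).2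
        have hi₃m : i₃ < i₄ := (Finset.mem_Ico.mp hi₃).2
        have hfact : ∑ i₂ ∈ Finset.Ico 1 i₃, 6 * (gfun (i₃ - i₂) * gfun (i₄ - i₃))
            = 6 * gfun (i₄ - i₃) * ∑ i₂ ∈ Finset.Ico 1 i₃, gfun (i₃ - i₂) := by
          rw [Finset.mul_sum]
          apply Finset.sum_congr rfl
          intro i₂ _
          ring
        rw [hfact, sum_reflect i₃ gfun]
        have hsum := hS i₃ (by omega)
        calc 6 * gfun (i₄ - i₃) * ∑ i₂ ∈ Finset.Ico 1 i₃, gfun i₂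
            ≤ 6 * gfun (i₄ - i₃) * (2 * Real.sqrt m) :=
              mul_le_mul_of_nonneg_left hsum (mul_nonneg (by norm_num) (gfun_nonneg _))
          _ = 6 * (2 * Real.sqrt m) * gfun (i₄ - i₃) := by ring
    _ ≤ ∑ i₄ ∈ Finset.Icc 1 m, 6 * (2 * Real.sqrt m) * (2 * Real.sqrt m) := by
        apply Finset.sum_le_sum; intro i₄ hi₄
        have hi₄m : i₄ ≤ m := (Finset.mem_Icc.mp hi₄).2
        rw [← Finset.mul_sum, sum_reflect i₄ gfun]
        exact mul_le_mul_of_nonneg_left (hS i₄ (by omega)) (by positivity)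
    _ = (m : ℝ) * (6 * (2 * Real.sqrt m) * (2 * Real.sqrt m)) := by
        rw [Finset.sum_const, Nat.card_Icc]
        simp
    _ = 24 * ((m:ℝ) * (Real.sqrt m * Real.sqrt m)) := by ring
    _ = 24 * (m : ℝ) ^ 2 := by
        rw [hsqm]; ring
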